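/- Exactness of charge/discharge relaxation under degradation cost: in the one-period problem min over (P^c, P^d) ∈ [0, P̄]² of c·P^d − λ·(η_c P^c − P^d/η_d) subject to net injection η_c P^c − P^d/η_d = E fixed, if the degradation cost c > 0 and efficiencies satisfy η_c η_d < 1, then any optimal solution satisfies P^c · P^d = 0, i.e., simultaneous charging and discharging never occurs at optimum even without a complementarity constraint. -/
import Mathlib


/-- Exactness of the charge/discharge relaxation under a strictly positive
degradation cost: in the one-period problem, any optimal `(Pc, Pd)` with fixed
net injection `η_c Pc − Pd/η_d = E` satisfies `Pc · Pd = 0`. -/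
theorem storage_relaxation_exact
    (c lam ηc ηd Pbar E : ℝ)
    (hc : 0 < c) (hηc : 0 < ηc) (hηc1 : ηc ≤ 1) (hηd : 0 < ηd) (hηd1 : ηd ≤ 1)
    (hrt : ηc * ηd < 1) (hlam : 0 ≤ lam) (hPbar : 0 ≤ Pbar)
    (Pc Pd : ℝ)
    (hfeas : 0 ≤ Pc ∧ Pc ≤ Pbar ∧ 0 ≤ Pd ∧ Pd ≤ Pbar ∧ ηc * Pc - Pd / ηd = E)
    (hopt : ∀ Pc' Pd' : ℝ,
      (0 ≤ Pc' ∧ Pc' ≤ Pbar ∧ 0 ≤ Pd' ∧ Pd' ≤ Pbar ∧ ηc * Pc' - Pd' / ηd = E) →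
      c * Pd - lam * (ηc * Pc - Pd / ηd) ≤
        c * Pd' - lam * (ηc * Pc' - Pd' / ηd)) :
    Pc * Pd = 0 := by
  obtain ⟨hPc0, hPcb, hPd0, hPdb, hnet⟩ := hfeas
  by_contra h
  have hPc : 0 < Pc := lt_of_le_of_ne hPc0 fun e => h (by rw [← e]; ring)
  have hPd : 0 < Pd := lt_of_le_of_ne hPd0 fun e => h (by rw [← e]; ring)
  have hη : 0 < ηc * ηd := mul_pos hηc hηd
  set ε : ℝ := min Pc (Pd / (ηc * ηd)) with hε
  have hεpos : 0 < ε := lt_min hPc (div_pos hPd hη)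
  have hε1 : ε ≤ Pc := min_le_left _ _
  have hε2 : ηc * ηd * ε ≤ Pd := by
    have := min_le_right Pc (Pd / (ηc * ηd))
    calc ηc * ηd * ε ≤ ηc * ηd * (Pd / (ηc * ηd)) := by
          exact mul_le_mul_of_nonneg_left this hη.le
      _ = Pd := by field_simp
  have hfeas' : 0 ≤ Pc - ε ∧ Pc - ε ≤ Pbar ∧ 0 ≤ Pd - ηc * ηd * ε ∧
      Pd - ηc * ηd * ε ≤ Pbar ∧ ηc * (Pc - ε) - (Pd - ηc * ηd * ε) / ηd = E := by
    refine ⟨by linarith, by linarith, by linarith, ?_, ?_⟩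
    · nlinarith
    · field_simp
      field_simp at hnet
      linarith
  have := hopt (Pc - ε) (Pd - ηc * ηd * ε) hfeas'
  rw [hnet, hfeas'.2.2.2.2] at this
  have : c * Pd ≤ c * (Pd - ηc * ηd * ε) := by linarith
  nlinarith [mul_pos hc (mul_pos hη hεpos)]
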